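/- Let E be a real inner product space, let B : E → E → ℝ be a bilinear form, let u ∈ E with ‖u‖ = 1, let t ∈ (0, π/2), and let a > 0. If B(v, v) ≥ cot t · (‖v‖² − ⟨u, v⟩²) for every v ∈ E, then for every v ∈ E, a·(cos t)^{−a}·tan t · B(v, v) + (a²·(cos t)^{−a}·tan² t + a·(cos t)^{−a−2})·⟨u, v⟩² ≥ a·(cos t)^{−a}·‖v‖² + a·(a + 1)·(cos t)^{−a}·tan² t·⟨u, v⟩². -/

import Mathlib

open Real

/-- Pointwise linear-algebra content of the Hessian estimate for
`(sec ρ)^a`: if a bilinear form `B` satisfies the Hessian comparison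
`B(v,v) ≥ cot t·(‖v‖² − ⟨u,v⟩²)` for a unit vector `u`, `t ∈ (0, π/2)`
and `a > 0`, then for all `v`,
`a·(cos t)^{−a}·tan t·B(v,v) + (a²·(cos t)^{−a}·tan² t + a·(cos t)^{−a−2})·⟨u,v⟩²
  ≥ a·(cos t)^{−a}·‖v‖² + a·(a+1)·(cos t)^{−a}·tan² t·⟨u,v⟩²`. -/
theorem stmt_8 {E : Type*} [NormedAddCommGroup E] [InnerProductSpace ℝ E]
    (B : E →ₗ[ℝ] E →ₗ[ℝ] ℝ) (u : E) (hu : ‖u‖ = 1) (t : ℝ)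
    (ht : t ∈ Set.Ioo (0 : ℝ) (π / 2)) (a : ℝ) (ha : 0 < a)
    (hB : ∀ v : E, B v v ≥ (Real.cos t / Real.sin t) *
      (‖v‖ ^ 2 - (inner ℝ u v : ℝ) ^ 2)) :
    ∀ v : E,
      a * Real.cos t ^ (-a) * Real.tan t * B v v
        + (a ^ 2 * Real.cos t ^ (-a) * Real.tan t ^ 2
            + a * Real.cos t ^ (-a - 2)) * (inner ℝ u v : ℝ) ^ 2 ≥
      a * Real.cos t ^ (-a) * ‖v‖ ^ 2
        + a * (a + 1) * Real.cos t ^ (-a) * Real.tan t ^ 2 *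
            (inner ℝ u v : ℝ) ^ 2 := by

  intro v
  obtain ⟨ht0, ht2⟩ := ht
  have hc : 0 < Real.cos t := Real.cos_pos_of_mem_Ioo ⟨by linarith [Real.pi_pos], ht2⟩
  have hs : 0 < Real.sin t := Real.sin_pos_of_pos_of_lt_pi ht0 (by linarith [Real.pi_pos])
  have htan : Real.tan t = Real.sin t / Real.cos t := Real.tan_eq_sin_div_cos t
  have hkey : Real.tan t * (Real.cos t / Real.sin t) = 1 := by
    rw [htan]; field_simp
  have hpow : Real.cos t ^ (-a - 2) = Real.cos t ^ (-a) * (Real.tan t ^ 2 + 1) := by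
    have h1 : Real.cos t ^ (-a - 2) = Real.cos t ^ (-a) * Real.cos t ^ (-2 : ℝ) := by
      rw [← Real.rpow_add hc]; ring_nf
    have h2 : Real.cos t ^ (-2 : ℝ) = (Real.cos t ^ 2)⁻¹ := by
      rw [Real.rpow_neg hc.le]
      congr 1
      rw [show (2 : ℝ) = ((2 : ℕ) : ℝ) by norm_num, Real.rpow_natCast]
    have h3 : Real.tan t ^ 2 + 1 = (Real.cos t ^ 2)⁻¹ := by
      rw [htan, div_pow]
      field_simp
      exact Real.sin_sq_add_cos_sq t
    rw [h1, h2, h3]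
  have hcpow : 0 < Real.cos t ^ (-a) := Real.rpow_pos_of_pos hc _
  have hBv := hB v
  have htanpos : 0 < Real.tan t := by rw [htan]; positivity
  have hmul : Real.tan t * B v v ≥ ‖v‖ ^ 2 - (inner ℝ u v : ℝ) ^ 2 := by
    calc Real.tan t * B v v ≥ Real.tan t * ((Real.cos t / Real.sin t) *
        (‖v‖ ^ 2 - (inner ℝ u v : ℝ) ^ 2)) := by
          exact mul_le_mul_of_nonneg_left hBv (le_of_lt htanpos)
      _ = ‖v‖ ^ 2 - (inner ℝ u v : ℝ) ^ 2 := by rw [← mul_assoc, hkey, one_mul]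
  have hac : 0 < a * Real.cos t ^ (-a) := by positivity
  rw [hpow]
  nlinarith [mul_le_mul_of_nonneg_left hmul (le_of_lt hac)]
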